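/- If A is a square real matrix with nonpositive off-diagonal entries such that there exists a vector e > 0 (entrywise) with Ae > 0 (entrywise), then A is invertible and A⁻¹ has nonnegative entries. -/

import Mathlib

open Matrix

theorem stmt_17 (n : ℕ) (A : Matrix (Fin n) (Fin n) ℝ)
    (hoff : ∀ i j : Fin n, i ≠ j → A i j ≤ 0)
    (e : Fin n → ℝ) (he : ∀ i, 0 < e i) (hAe : ∀ i, 0 < A.mulVec e i) :
    IsUnit A ∧ ∀ i j : Fin n, 0 ≤ A⁻¹ i j := by
  -- Key lemma: A.mulVec x ≥ 0 entrywise implies x ≥ 0 entrywise.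
  have key : ∀ x : Fin n → ℝ, (∀ i, 0 ≤ A.mulVec x i) → ∀ i, 0 ≤ x i := by
    intro x hx
    by_contra hcon
    push_neg at hcon
    obtain ⟨i0, hi0⟩ := hcon
    have hne : (Finset.univ : Finset (Fin n)).Nonempty := ⟨i0, Finset.mem_univ _⟩
    obtain ⟨k, _, hk⟩ := Finset.exists_max_image Finset.univ (fun j => -x j / e j) hne
    set t : ℝ := -x k / e k with ht
    have htpos : 0 < t := by
      have h1 : 0 < -x i0 / e i0 := div_pos (by linarith) (he i0)
      have h2 := hk i0 (Finset.mem_univ _)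
      simpa [ht] using lt_of_lt_of_le h1 h2
    set y : Fin n → ℝ := fun j => x j + t * e j with hy
    have hynn : ∀ j, 0 ≤ y j := by
      intro j
      have h2 := hk j (Finset.mem_univ _)
      have : -x j ≤ t * e j := by
        have := (div_le_iff₀ (he j)).mp h2
        linarith
      simp only [hy]; linarith
    have hyk : y k = 0 := by
      have hek : e k ≠ 0 := (he k).ne'
      simp only [hy, ht]
      field_simp
      ring
    have hAy : A.mulVec y k = A.mulVec x k + t * A.mulVec e k := by
      simp only [hy, Matrix.mulVec, dotProduct]
      rw [Finset.mul_sum, ← Finset.sum_add_distrib]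
      exact Finset.sum_congr rfl (fun j _ => by ring)
    have hpos : 0 < A.mulVec y k := by
      rw [hAy]
      have := hx k
      have := hAe k
      nlinarith
    have hneg : A.mulVec y k ≤ 0 := by
      rw [Matrix.mulVec, dotProduct]
      apply Finset.sum_nonpos
      intro j _
      by_cases hj : j = k
      · subst hj; rw [hyk]; simp
      · exact mul_nonpos_of_nonpos_of_nonneg (hoff k j (Ne.symm hj)) (hynn j)
    linarith
  -- injectivity of mulVec
  have hinj : Function.Injective A.mulVec := by
    intro u v huv
    have h1 : ∀ i, 0 ≤ (u - v) i := by
      apply key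
      intro i
      simp [Matrix.mulVec_sub, huv]
    have h2 : ∀ i, 0 ≤ (v - u) i := by
      apply key
      intro i
      simp [Matrix.mulVec_sub, huv]
    funext i
    have := h1 i
    have := h2 i
    simp only [Pi.sub_apply] at *
    linarith
  have hu : IsUnit A := by
    rwa [← Matrix.mulVec_injective_iff_isUnit]
  refine ⟨hu, ?_⟩
  intro i j
  have hmul : A * A⁻¹ = 1 :=
    Matrix.mul_nonsing_inv A ((Matrix.isUnit_iff_isUnit_det A).mp hu)
  have := key (fun k => A⁻¹ k j) ?_ i
  · exact this
  · intro i'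
    have h : A.mulVec (fun k => A⁻¹ k j) i' = (A * A⁻¹) i' j := by
      simp [Matrix.mulVec, dotProduct, Matrix.mul_apply]
    rw [h, hmul]
    by_cases hij : i' = j <;> simp [Matrix.one_apply, hij]
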